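/- Let M be a real symmetric positive definite n×n matrix and v ∈ ℝⁿ a nonzero vector, and set p = M v, R_p = M⁻¹ − (v vᵀ)/(vᵀ M v), and R_v = M − (p pᵀ)/(pᵀ M⁻¹ p). Then R_v = M R_p M, and a vector w ∈ ℝⁿ satisfies R_v w = 0 if and only if w is a scalar multiple of v; that is, the kernel of R_v is exactly the span of v. -/

import Mathlib

open Matrix

noncomputable section

/-- `R_p = M⁻¹ − (v vᵀ)/(vᵀ M v)`. -/
def Rp {n : ℕ} (M : Matrix (Fin n) (Fin n) ℝ) (v : Fin n → ℝ) : Matrix (Fin n) (Fin n) ℝ :=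
  M⁻¹ - (v ⬝ᵥ M.mulVec v)⁻¹ • vecMulVec v v

/-- `R_v = M − (p pᵀ)/(pᵀ M⁻¹ p)` where `p = M v`. -/
def Rv {n : ℕ} (M : Matrix (Fin n) (Fin n) ℝ) (v : Fin n → ℝ) : Matrix (Fin n) (Fin n) ℝ :=
  M - ((M.mulVec v) ⬝ᵥ M⁻¹.mulVec (M.mulVec v))⁻¹ • vecMulVec (M.mulVec v) (M.mulVec v)

theorem vmvmul {n : ℕ} (a b w : Fin n → ℝ) : (vecMulVec a b).mulVec w = (b ⬝ᵥ w) • a := by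
  ext i; simp [vecMulVec, mulVec, dotProduct, Finset.mul_sum, mul_comm, mul_left_comm]

theorem mulvmv {n : ℕ} (M : Matrix (Fin n) (Fin n) ℝ) (a b : Fin n → ℝ) :
    M * vecMulVec a b = vecMulVec (M.mulVec a) b := by
  rw [vecMulVec_eq Unit, vecMulVec_eq Unit, ← Matrix.mul_assoc]; congr 1

theorem vmvmulM {n : ℕ} (M : Matrix (Fin n) (Fin n) ℝ) (a b : Fin n → ℝ) :
    vecMulVec a b * M = vecMulVec a (M.vecMul b) := by
  rw [vecMulVec_eq Unit, vecMulVec_eq Unit, Matrix.mul_assoc]; congr 1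

/-- for `M` symmetric positive definite and `v ≠ 0`, with `p = M v`,
`R_v = M R_p M`, and the kernel of `R_v` is exactly the span of `v`. -/
theorem Rv_eq_MRpM_and_kernel_eq_span_v {n : ℕ} (M : Matrix (Fin n) (Fin n) ℝ)
    (hM : M.PosDef) (v : Fin n → ℝ) (hv : v ≠ 0) :
    Rv M v = M * Rp M v * M ∧
    ∀ w : Fin n → ℝ, (Rv M v).mulVec w = 0 ↔ ∃ c : ℝ, w = c • v := by
  have hMs : Mᵀ = M := hM.1
  have hdet : IsUnit M.det := isUnit_iff_ne_zero.mpr hM.det_pos.ne'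
  have h1 : M⁻¹ * M = 1 := nonsing_inv_mul M hdet
  have h2 : M * M⁻¹ = 1 := mul_nonsing_inv M hdet
  have hc : 0 < v ⬝ᵥ M.mulVec v := hM.dotProduct_mulVec_pos hv
  have hc0 : v ⬝ᵥ M.mulVec v ≠ 0 := hc.ne'
  have hinvv : M⁻¹.mulVec (M.mulVec v) = v := by
    rw [mulVec_mulVec, h1, one_mulVec]
  have hvm : M.vecMul v = M.mulVec v := by
    rw [← hMs, vecMul_transpose, hMs]
  set p := M.mulVec v with hp
  have hpd : p ⬝ᵥ M⁻¹.mulVec p = v ⬝ᵥ M.mulVec v := by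
    rw [hinvv, dotProduct_comm]
  have hRv : Rv M v = M - (v ⬝ᵥ M.mulVec v)⁻¹ • vecMulVec p p := by
    rw [Rv, hpd]
  constructor
  · rw [hRv, Rp, Matrix.mul_sub, Matrix.sub_mul, Matrix.mul_smul, Matrix.smul_mul,
      h2, Matrix.one_mul, mulvmv, vmvmulM, hvm]
  · intro w
    have hmv : (Rv M v).mulVec w = M.mulVec w - ((v ⬝ᵥ M.mulVec v)⁻¹ * (p ⬝ᵥ w)) • p := by
      rw [hRv, sub_mulVec, smul_mulVec, vmvmul, smul_smul]
    constructor
    · intro h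
      refine ⟨(v ⬝ᵥ M.mulVec v)⁻¹ * (p ⬝ᵥ w), ?_⟩
      have hMz : M.mulVec (w - ((v ⬝ᵥ M.mulVec v)⁻¹ * (p ⬝ᵥ w)) • v) = 0 := by
        rw [mulVec_sub, mulVec_smul, ← hp]
        rw [hmv] at h
        exact h
      have := congrArg (M⁻¹.mulVec ·) hMz
      simp only [mulVec_mulVec, h1, one_mulVec, mulVec_zero] at this
      exact sub_eq_zero.mp this
    · rintro ⟨c, rfl⟩
      rw [hmv, mulVec_smul, ← hp]
      have hpw : p ⬝ᵥ c • v = c * (v ⬝ᵥ M.mulVec v) := by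
        rw [dotProduct_smul, dotProduct_comm]; ring_nf
        simp [mul_comm]
        exact Or.inl rfl
      rw [hpw]
      rw [show (v ⬝ᵥ M.mulVec v)⁻¹ * (c * (v ⬝ᵥ M.mulVec v)) = c by
        field_simp
        exact mul_div_cancel_left₀ c hc0]
      simp

end
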